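/- Let (s_n) be a sequence of non-negative real numbers bounded above by a constant C > 0, and suppose s_{n+1} ≤ (1 − α_n) s_n + α_n β_n + γ_n for all n ≥ 0, where (α_n) ⊆ [0,1], (γ_n) ⊆ [0,∞), and (β_n) is a real sequence. Let S₁, S₂, S₃ : (0,∞) → ℕ satisfy: (a) ∏_{k=0}^{S₁(ε)} (1 − α_k) ≤ ε for all ε > 0; (b) β_n ≤ ε for all ε > 0 and all n ≥ S₂(ε); (c) ∑_{n=j}^{i} γ_n ≤ ε for all ε > 0 and all i ≥ j ≥ S₃(ε). Suppose moreover that D : (0,∞) → (0,∞) satisfies 0 < D(ε) ≤ ∏_{k=0}^{max{S₂(ε/3), S₃(ε/3)}} (1 − α_k) for all ε > 0. Then for all ε > 0 and all n ≥ Φ(ε) := max{S₁(ε·D(ε)/(3C)), S₂(ε/3), S₃(ε/3)}, one has s_{n+1} ≤ ε. -/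

import Mathlib

open Finset in
/-- Quantitative version of Xu's convergence lemma, with explicit rates. -/
theorem xu_lemma_quantitative
    (s α β γ : ℕ → ℝ) (C : ℝ) (hC : 0 < C)
    (hs : ∀ n, 0 ≤ s n ∧ s n ≤ C)
    (hα : ∀ n, α n ∈ Set.Icc (0 : ℝ) 1)
    (hγ : ∀ n, 0 ≤ γ n)
    (hrec : ∀ n, s (n + 1) ≤ (1 - α n) * s n + α n * β n + γ n)
    (S₁ S₂ S₃ : ℝ → ℕ)
    (hS₁ : ∀ ε > (0 : ℝ), ∏ k ∈ Finset.range (S₁ ε + 1), (1 - α k) ≤ ε)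
    (hS₂ : ∀ ε > (0 : ℝ), ∀ n, S₂ ε ≤ n → β n ≤ ε)
    (hS₃ : ∀ ε > (0 : ℝ), ∀ i j : ℕ, S₃ ε ≤ j → j ≤ i →
      ∑ n ∈ Finset.Icc j i, γ n ≤ ε)
    (D : ℝ → ℝ)
    (hD : ∀ ε > (0 : ℝ), 0 < D ε ∧
      D ε ≤ ∏ k ∈ Finset.range (max (S₂ (ε / 3)) (S₃ (ε / 3)) + 1), (1 - α k)) :
    ∀ ε > (0 : ℝ), ∀ n,
      max (S₁ (ε * D ε / (3 * C))) (max (S₂ (ε / 3)) (S₃ (ε / 3))) ≤ n →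
      s (n + 1) ≤ ε := by
  intro ε hε n hn
  set N := max (S₂ (ε / 3)) (S₃ (ε / 3)) with hNdef
  obtain ⟨hDpos, hDle⟩ := hD ε hε
  have hε3 : (0 : ℝ) < ε / 3 := by linarith
  have hεC : 0 < ε * D ε / (3 * C) := by positivity
  have hfac : ∀ k, 0 ≤ 1 - α k ∧ 1 - α k ≤ 1 :=
    fun k => ⟨by linarith [(hα k).2], by linarith [(hα k).1]⟩
  have hprodN : D ε ≤ ∏ k ∈ Finset.range N, (1 - α k) := by
    calc D ε ≤ ∏ k ∈ Finset.range (N + 1), (1 - α k) := hDle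
      _ = (∏ k ∈ Finset.range N, (1 - α k)) * (1 - α N) := Finset.prod_range_succ _ _
      _ ≤ (∏ k ∈ Finset.range N, (1 - α k)) * 1 := by
          apply mul_le_mul_of_nonneg_left (hfac N).2
          exact Finset.prod_nonneg fun k _ => (hfac k).1
      _ = _ := mul_one _
  have hprodNpos : 0 < ∏ k ∈ Finset.range N, (1 - α k) := lt_of_lt_of_le hDpos hprodN
  have hNn : N ≤ n := le_trans (le_max_right _ _) hn
  have hβ : ∀ k, N ≤ k → α k * β k ≤ α k * (ε / 3) := fun k hk =>
    mul_le_mul_of_nonneg_left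
      (hS₂ (ε / 3) hε3 k (le_trans (le_max_left _ _) hk)) (hα k).1
  have key : ∀ m, s (N + m + 1) ≤ (∏ k ∈ Finset.Icc N (N + m), (1 - α k)) * s N
      + (ε / 3) * (1 - ∏ k ∈ Finset.Icc N (N + m), (1 - α k))
      + ∑ k ∈ Finset.Icc N (N + m), γ k := by
    intro m
    induction m with
    | zero =>
      simp only [Nat.add_zero, Finset.Icc_self, Finset.prod_singleton,
        Finset.sum_singleton]
      have h1 := hrec N
      have h2 := hβ N le_rfl
      linarith
    | succ m ih =>
      have hPnn : 0 ≤ ∏ k ∈ Finset.Icc N (N + m), (1 - α k) :=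
        Finset.prod_nonneg fun k _ => (hfac k).1
      have hGnn : 0 ≤ ∑ k ∈ Finset.Icc N (N + m), γ k :=
        Finset.sum_nonneg fun k _ => hγ k
      have hstep := hrec (N + m + 1)
      have hb := hβ (N + m + 1) (by omega)
      have hProd : ∏ k ∈ Finset.Icc N (N + (m + 1)), (1 - α k)
          = (∏ k ∈ Finset.Icc N (N + m), (1 - α k)) * (1 - α (N + m + 1)) := by
        rw [show N + (m + 1) = (N + m) + 1 from rfl,
          Finset.prod_Icc_succ_top (by omega)]
      have hSum : ∑ k ∈ Finset.Icc N (N + (m + 1)), γ k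
          = (∑ k ∈ Finset.Icc N (N + m), γ k) + γ (N + m + 1) := by
        rw [show N + (m + 1) = (N + m) + 1 from rfl,
          Finset.sum_Icc_succ_top (by omega)]
      have h1 : (1 - α (N + m + 1)) * s (N + m + 1)
          ≤ (1 - α (N + m + 1)) * ((∏ k ∈ Finset.Icc N (N + m), (1 - α k)) * s N
            + (ε / 3) * (1 - ∏ k ∈ Finset.Icc N (N + m), (1 - α k))
            + ∑ k ∈ Finset.Icc N (N + m), γ k) :=
        mul_le_mul_of_nonneg_left ih (hfac _).1
      rw [show N + (m + 1) + 1 = (N + m + 1) + 1 from rfl, hProd, hSum]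
      nlinarith [mul_nonneg (hα (N + m + 1)).1 hGnn]
  obtain ⟨m, rfl⟩ : ∃ m, n = N + m := ⟨n - N, by omega⟩
  have hkey := key m
  set P := ∏ k ∈ Finset.Icc N (N + m), (1 - α k) with hPdef
  have hPnn : 0 ≤ P := Finset.prod_nonneg fun k _ => (hfac k).1
  -- product over range (n+1) decomposes
  have hdecomp : (∏ k ∈ Finset.range N, (1 - α k)) * P
      = ∏ k ∈ Finset.range (N + m + 1), (1 - α k) := by
    rw [hPdef, ← Finset.Ico_add_one_right_eq_Icc, Finset.range_eq_Ico, Finset.range_eq_Ico]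
    exact Finset.prod_Ico_consecutive (fun k => 1 - α k) (Nat.zero_le N) (by omega : N ≤ N + m + 1)
  have hS₁n : S₁ (ε * D ε / (3 * C)) ≤ N + m := le_trans (le_max_left _ _) hn
  have hfull : ∏ k ∈ Finset.range (N + m + 1), (1 - α k) ≤ ε * D ε / (3 * C) := by
    have hsplit : (∏ k ∈ Finset.range (S₁ (ε * D ε / (3 * C)) + 1), (1 - α k))
        * (∏ k ∈ Finset.Ico (S₁ (ε * D ε / (3 * C)) + 1) (N + m + 1), (1 - α k))
        = ∏ k ∈ Finset.range (N + m + 1), (1 - α k) := by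
      rw [Finset.range_eq_Ico, Finset.range_eq_Ico]
      exact Finset.prod_Ico_consecutive (fun k => 1 - α k) (Nat.zero_le (S₁ (ε * D ε / (3 * C)) + 1))
        (by omega : S₁ (ε * D ε / (3 * C)) + 1 ≤ N + m + 1)
    rw [← hsplit]
    calc (∏ k ∈ Finset.range (S₁ (ε * D ε / (3 * C)) + 1), (1 - α k))
        * (∏ k ∈ Finset.Ico (S₁ (ε * D ε / (3 * C)) + 1) (N + m + 1), (1 - α k))
        ≤ (∏ k ∈ Finset.range (S₁ (ε * D ε / (3 * C)) + 1), (1 - α k)) * 1 := by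
          apply mul_le_mul_of_nonneg_left
          · exact Finset.prod_le_one (fun k _ => (hfac k).1) (fun k _ => (hfac k).2)
          · exact Finset.prod_nonneg fun k _ => (hfac k).1
      _ = ∏ k ∈ Finset.range (S₁ (ε * D ε / (3 * C)) + 1), (1 - α k) := mul_one _
      _ ≤ ε * D ε / (3 * C) := hS₁ _ hεC
  have hPle : P ≤ ε / (3 * C) := by
    have h1 : P * (∏ k ∈ Finset.range N, (1 - α k))
        ≤ (ε / (3 * C)) * (∏ k ∈ Finset.range N, (1 - α k)) := by
      calc P * (∏ k ∈ Finset.range N, (1 - α k))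
          = ∏ k ∈ Finset.range (N + m + 1), (1 - α k) := by rw [mul_comm]; exact hdecomp
        _ ≤ ε * D ε / (3 * C) := hfull
        _ = (ε / (3 * C)) * D ε := by ring
        _ ≤ (ε / (3 * C)) * (∏ k ∈ Finset.range N, (1 - α k)) := by
            apply mul_le_mul_of_nonneg_left hprodN
            positivity
    exact le_of_mul_le_mul_right h1 hprodNpos
  have hsum : ∑ k ∈ Finset.Icc N (N + m), γ k ≤ ε / 3 :=
    hS₃ (ε / 3) hε3 (N + m) N (le_max_right _ _) (by omega)
  have hPC : P * s N ≤ ε / 3 := by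
    calc P * s N ≤ P * C := mul_le_mul_of_nonneg_left (hs N).2 hPnn
      _ ≤ (ε / (3 * C)) * C := mul_le_mul_of_nonneg_right hPle (le_of_lt hC)
      _ = ε / 3 := by field_simp
  have hεP : (ε / 3) * (1 - P) ≤ ε / 3 := by nlinarith
  linarith
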